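/- Let n be a positive integer, N = 2ⁿ, ω = exp(2πi/N), and let c : ZMod N → ℂ be the state c(b) = ω^b. Let Add be the addition permutation on two N-dimensional registers, i.e. the linear map on functions ZMod N × ZMod N → ℂ induced by the permutation of basis states |a, b⟩ ↦ |a, a + b⟩. Then for every v : ZMod N → ℂ, Add(v ⊗ c) = (P† v) ⊗ c, where P† is the diagonal operator (P† v)(a) = ω^{−a} · v(a). That is, an adder applied with the Fourier catalyst state in the second register implements the inverse phase-gradient on the first register while returning the catalyst unchanged. -/
import Mathlib


/- STATEMENT 14: The addition permutation |a,b⟩ ↦ |a,a+b⟩ on two N-dimensional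
registers (N = 2ⁿ), with the Fourier catalyst c(b) = ω^b in the second register,
implements the inverse phase gradient (P†v)(a) = ω^{−a}·v(a) on the first
register while returning the catalyst: Add(v ⊗ c) = (P†v) ⊗ c.
Here Add(f)(a,b) = f(a, b−a). -/

open Complex

noncomputable section

/-- The Fourier catalyst state `c(b) = ω^b` with `ω = exp(2πi/2ⁿ)`. -/
def fcat (n : ℕ) : ZMod (2 ^ n) → ℂ :=
  fun b => (Complex.exp (2 * Real.pi * Complex.I / (2 ^ n))) ^ b.val

theorem addition_inverse_phase_gradient_catalysis (n : ℕ) (hn : 0 < n)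
    (v : ZMod (2 ^ n) → ℂ) :
    (fun p : ZMod (2 ^ n) × ZMod (2 ^ n) => v p.1 * fcat n (p.2 - p.1))
      = fun p : ZMod (2 ^ n) × ZMod (2 ^ n) =>
          (((Complex.exp (2 * Real.pi * Complex.I / (2 ^ n))) ^ p.1.val)⁻¹ * v p.1)
            * fcat n p.2 := by
  have hN : (2 ^ n : ℕ) ≠ 0 := by positivity
  haveI : NeZero (2 ^ n : ℕ) := ⟨hN⟩
  set ω := Complex.exp (2 * Real.pi * Complex.I / (2 ^ n)) with hω
  have hω0 : ω ≠ 0 := Complex.exp_ne_zero _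
  have hω1 : ω ^ (2 ^ n : ℕ) = 1 := by
    rw [hω, ← Complex.exp_nat_mul]
    push_cast
    rw [mul_div_cancel₀ _ (pow_ne_zero _ two_ne_zero : ((2:ℂ) ^ n : ℂ) ≠ 0)]
    exact Complex.exp_two_pi_mul_I
  funext p
  obtain ⟨a, b⟩ := p
  simp only [fcat]
  have key : ω ^ (b - a).val * ω ^ a.val = ω ^ b.val := by
    rw [← pow_add]
    have h1 : ω ^ ((b - a).val + a.val) = ω ^ (((b - a).val + a.val) % (2 ^ n)) :=
      pow_eq_pow_mod _ hω1
    rw [h1, ← ZMod.val_add, sub_add_cancel]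
  field_simp
  simp only [← hω]
  rw [mul_assoc, key]

end
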